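/- Let Q be a self-adjoint continuous linear operator on E and define f : E → [0,∞) by f(x) = √(max(1 − ⟨x,Qx⟩, 0)). Then f is upper radial, and its upper radial transformation is f^Γ(y) = √(max(1 + ⟨y,Qy⟩, 0)) for every y ∈ E. -/

import Mathlib

open scoped ENNReal RealInnerProductSpace Pointwise
open Metric Set

variable {E : Type*} [NormedAddCommGroup E] [InnerProductSpace ℝ E] [FiniteDimensional ℝ E]

/-- The hypograph of `f`, viewed inside `E × (0,∞)`. -/
def hypo (f : E → ℝ≥0∞) : Set (E × ℝ) := {p | 0 < p.2 ∧ ENNReal.ofReal p.2 ≤ f p.1}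

/-- The epigraph of `f`, viewed inside `E × (0,∞)`. -/
def epigraph (f : E → ℝ≥0∞) : Set (E × ℝ) := {p | 0 < p.2 ∧ f p.1 ≤ ENNReal.ofReal p.2}

/-- `f` is upper semicontinuous: its hypograph is closed in `E × (0,∞)`. -/
def IsUSC (f : E → ℝ≥0∞) : Prop := closure (hypo f) ∩ {p : E × ℝ | 0 < p.2} ⊆ hypo f

/-- The perspective function `(y, v) ↦ v ⬝ f(y/v)`. -/
noncomputable def persp (f : E → ℝ≥0∞) (p : E × ℝ) : ℝ≥0∞ :=
  ENNReal.ofReal p.2 * f (p.2⁻¹ • p.1)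

/-- `f` is upper radial: its perspective function is u.s.c. on `E × (0,∞)` and
nondecreasing in `v`. -/
def UpperRadial (f : E → ℝ≥0∞) : Prop :=
  UpperSemicontinuousOn (persp f) {p : E × ℝ | 0 < p.2} ∧
  ∀ (y : E) (v v' : ℝ), 0 < v → v ≤ v' → persp f (y, v) ≤ persp f (y, v')

/-- `f` is strictly upper radial. -/
def StrictlyUpperRadial (f : E → ℝ≥0∞) : Prop :=
  UpperRadial f ∧ ∀ (y : E) (v v' : ℝ), 0 < v → v < v' →
    0 < persp f (y, v) → persp f (y, v) < ⊤ → persp f (y, v) < persp f (y, v')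

/-- The upper radial transformation `f^Γ(y) = sup{v > 0 : v ⬝ f(y/v) ≤ 1}` (`sup ∅ = 0`). -/
noncomputable def radial (f : E → ℝ≥0∞) (y : E) : ℝ≥0∞ :=
  ⨆ (v : ℝ) (_ : 0 < v ∧ persp f (y, v) ≤ 1), ENNReal.ofReal v

/-- The Euclidean norm on `E × ℝ`. -/
noncomputable def pnorm (p : E × ℝ) : ℝ := Real.sqrt (‖p.1‖ ^ 2 + p.2 ^ 2)

/-- `w` is a proximal normal to `S` at `z ∈ S`: `dist(z + ε w, S) = ε ‖w‖` for some `ε > 0`,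
with the Euclidean distance on `E × ℝ`. -/
def IsProxNormal (S : Set (E × ℝ)) (z w : E × ℝ) : Prop :=
  z ∈ S ∧ ∃ ε : ℝ, 0 < ε ∧ sInf ((fun q => pnorm (z + ε • w - q)) '' S) = ε * pnorm w

/-- `R(f)`: the infimum of `‖x'‖` over points on hyperplanes induced by proximal normals of
the hypograph (`inf ∅ = ∞`). -/
noncomputable def Rrad (f : E → ℝ≥0∞) : ℝ≥0∞ :=
  ⨅ (x' : E) (_ : ∃ p w, IsProxNormal (hypo f) p w ∧
    ⟪w.1, x'⟫ = ⟪w.1, p.1⟫ + w.2 * p.2), ENNReal.ofReal ‖x'‖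

/-- `D(f) = sup{‖x‖ : 0 < f(x) < ∞}`. -/
noncomputable def Drad (f : E → ℝ≥0∞) : ℝ≥0∞ :=
  ⨆ (x : E) (_ : 0 < f x ∧ f x < ⊤), ENNReal.ofReal ‖x‖

/-- The proximal subdifferential of `f` at `x` (empty unless `f x ∈ (0,∞)`). -/
def subdiffP (f : E → ℝ≥0∞) (x : E) : Set E :=
  {ζ | 0 < f x ∧ f x < ⊤ ∧ IsProxNormal (epigraph f) (x, (f x).toReal) (ζ, -1)}

/-- The proximal supdifferential of `f` at `x` (empty unless `f x ∈ (0,∞)`). -/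
def supdiffP (f : E → ℝ≥0∞) (x : E) : Set E :=
  {ζ | 0 < f x ∧ f x < ⊤ ∧ IsProxNormal (hypo f) (x, (f x).toReal) (-ζ, 1)}

/-- `ζ` is a subgradient of `g` at `y`: `g(z) ≥ g(y) + ⟨ζ, z - y⟩` for all `z`. -/
def IsSubgrad (g : E → ℝ≥0∞) (y ζ : E) : Prop :=
  ∀ z : E, (g y : EReal) + ((⟪ζ, z - y⟫ : ℝ) : EReal) ≤ (g z : EReal)

/-- The Minkowski gauge `γ_S(y) = inf{λ > 0 : y ∈ λ S}` (`inf ∅ = ∞`). -/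
noncomputable def gaugeE (S : Set E) (y : E) : ℝ≥0∞ :=
  ⨅ (lam : ℝ) (_ : 0 < lam ∧ y ∈ lam • S), ENNReal.ofReal lam

/-- The indicator `ι_S` taking value `∞` on `S` and `0` elsewhere. -/
noncomputable def indic (S : Set E) (x : E) : ℝ≥0∞ := S.indicator (fun _ => (⊤ : ℝ≥0∞)) x

/-- `√(1 - ⟨x,Qx⟩)₊` is upper radial with radial dual `√(1 + ⟨y,Qy⟩)₊`. -/
theorem statement16 (Q : E →L[ℝ] E) (hQ : ∀ u w : E, ⟪Q u, w⟫ = ⟪u, Q w⟫)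
    (f : E → ℝ≥0∞)
    (hf : ∀ x : E, f x = ENNReal.ofReal (Real.sqrt (max (1 - ⟪x, Q x⟫) 0))) :
    UpperRadial f ∧
    ∀ y : E, radial f y = ENNReal.ofReal (Real.sqrt (max (1 + ⟪y, Q y⟫) 0)) := by
  have hpersp : ∀ (y : E) (v : ℝ), 0 < v →
      persp f (y, v) = ENNReal.ofReal (Real.sqrt (max (v ^ 2 - ⟪y, Q y⟫) 0)) := by
    intro y v hv
    have hv0 : v ≠ 0 := ne_of_gt hv
    have hip : ⟪v⁻¹ • y, Q (v⁻¹ • y)⟫ = ⟪y, Q y⟫ / v ^ 2 := by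
      rw [map_smul, real_inner_smul_left, real_inner_smul_right,
        eq_div_iff (pow_ne_zero 2 hv0)]
      rw [show v⁻¹ * (v⁻¹ * ⟪y, Q y⟫) * v ^ 2 = (v⁻¹ * v) ^ 2 * ⟪y, Q y⟫ from by ring,
        inv_mul_cancel₀ hv0, one_pow, one_mul]
    simp only [persp, hf]
    rw [hip, ← ENNReal.ofReal_mul hv.le]
    congr 1
    rw [← Real.sqrt_sq hv.le, ← Real.sqrt_mul (sq_nonneg v)]
    congr 1
    rw [mul_max_of_nonneg _ _ (sq_nonneg v), mul_zero]
    congr 1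
    field_simp
    rw [Real.sq_sqrt (sq_nonneg v)]
  have hcont : Continuous (fun p : E × ℝ =>
      ENNReal.ofReal (Real.sqrt (max (p.2 ^ 2 - ⟪p.1, Q p.1⟫) 0))) := by
    apply ENNReal.continuous_ofReal.comp
    apply Real.continuous_sqrt.comp
    exact ((continuous_snd.pow 2).sub
      (continuous_fst.inner (Q.continuous.comp continuous_fst))).max continuous_const
  constructor
  · constructor
    · intro p hp c hc
      have hp2 : 0 < p.2 := hp
      rw [show p = (p.1, p.2) from rfl, hpersp p.1 p.2 hp2] at hc
      have hev : ∀ᶠ p' in nhds p,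
          ENNReal.ofReal (Real.sqrt (max (p'.2 ^ 2 - ⟪p'.1, Q p'.1⟫) 0)) < c :=
        (hcont.tendsto p).eventually_lt_const hc
      filter_upwards [nhdsWithin_le_nhds hev, self_mem_nhdsWithin] with p' h1 h2
      rw [show p' = (p'.1, p'.2) from rfl, hpersp p'.1 p'.2 h2]
      exact h1
    · intro y v v' hv hvv'
      rw [hpersp y v hv, hpersp y v' (hv.trans_le hvv')]
      apply ENNReal.ofReal_le_ofReal
      apply Real.sqrt_le_sqrt
      have h2 : v ^ 2 ≤ v' ^ 2 := by nlinarith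
      exact max_le_max (by linarith) le_rfl
  · intro y
    rcases le_or_gt (1 + ⟪y, Q y⟫) 0 with h | h
    · rw [max_eq_right h, Real.sqrt_zero, ENNReal.ofReal_zero]
      apply le_antisymm _ zero_le
      apply iSup₂_le
      rintro v ⟨hv, hle⟩
      exfalso
      rw [hpersp y v hv, ENNReal.ofReal_le_one] at hle
      have ht := Real.sq_sqrt (le_max_right (v ^ 2 - ⟪y, Q y⟫) 0)
      have hs := Real.sqrt_nonneg (max (v ^ 2 - ⟪y, Q y⟫) 0)
      have h1 : max (v ^ 2 - ⟪y, Q y⟫) 0 ≤ 1 := by nlinarith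
      have h2 := le_max_left (v ^ 2 - ⟪y, Q y⟫) 0
      nlinarith
    · rw [max_eq_left h.le]
      set r := Real.sqrt (1 + ⟪y, Q y⟫) with hr
      have hr0 : 0 < r := Real.sqrt_pos.mpr h
      apply le_antisymm
      · apply iSup₂_le
        rintro v ⟨hv, hle⟩
        rw [hpersp y v hv, ENNReal.ofReal_le_one] at hle
        have ht := Real.sq_sqrt (le_max_right (v ^ 2 - ⟪y, Q y⟫) 0)
        have hs := Real.sqrt_nonneg (max (v ^ 2 - ⟪y, Q y⟫) 0)
        have h1 : max (v ^ 2 - ⟪y, Q y⟫) 0 ≤ 1 := by nlinarith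
        have h2 := le_max_left (v ^ 2 - ⟪y, Q y⟫) 0
        have hv2 : v ^ 2 ≤ 1 + ⟪y, Q y⟫ := by nlinarith
        apply ENNReal.ofReal_le_ofReal
        calc v = Real.sqrt (v ^ 2) := (Real.sqrt_sq hv.le).symm
          _ ≤ r := Real.sqrt_le_sqrt hv2
      · have hcond : 0 < r ∧ persp f (y, r) ≤ 1 := by
          refine ⟨hr0, ?_⟩
          rw [hpersp y r hr0]
          have hrq : r ^ 2 - ⟪y, Q y⟫ = 1 := by
            rw [hr, Real.sq_sqrt h.le]; ring
          simp [hrq]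
        exact le_iSup₂ (f := fun (v : ℝ) (_ : 0 < v ∧ persp f (y, v) ≤ 1) =>
          ENNReal.ofReal v) r hcond
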